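/- Let M = [[A, B],[Bᵀ, C]] be a symmetric positive definite n×n block matrix with A a square principal block. Then the smallest eigenvalue of M satisfies λ_min(M) ≥ min( λ_min(A)/8 , λ_min(M/A) / (1 + 4·λ_min(A)^{−2}·‖B‖_op²) ), where M/A = C − Bᵀ A^{−1} B is the Schur complement of A in M. -/

import Mathlib

open Matrix

/-- Smallest eigenvalue of a Hermitian real matrix. -/
noncomputable def lamMin {ι : Type*} [Fintype ι] [DecidableEq ι]
    (A : Matrix ι ι ℝ) (hA : A.IsHermitian) : ℝ :=
  ⨅ i, hA.eigenvalues i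

/-- The ℓ²→ℓ² operator norm of a real matrix. -/
noncomputable def opNorm {m n : Type*} [Fintype m] [Fintype n] [DecidableEq n]
    (B : Matrix m n ℝ) : ℝ :=
  ‖LinearMap.toContinuousLinearMap (Matrix.toEuclideanLin B)‖

namespace StmtAux

variable {n : Type*} [Fintype n] [DecidableEq n]

lemma star_eqT (U : Matrix n n ℝ) : star U = Uᵀ := by
  rw [Matrix.star_eq_conjTranspose, conjTranspose_eq_transpose_of_trivial]

lemma dot_conj (U : Matrix n n ℝ) (d : n → ℝ) (x : n → ℝ) :
    x ⬝ᵥ (U * diagonal d * star U) *ᵥ x = ∑ i, d i * ((star U *ᵥ x) i) ^ 2 := by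
  have h : (U * diagonal d * star U) *ᵥ x = U *ᵥ (diagonal d *ᵥ (star U *ᵥ x)) := by
    simp [mulVec_mulVec, Matrix.mul_assoc]
  have h2 : x ᵥ* U = star U *ᵥ x := by
    rw [star_eqT, mulVec_transpose]
  rw [h, dotProduct_mulVec, h2]
  simp only [dotProduct, mulVec_diagonal]
  exact Finset.sum_congr rfl fun i _ => by ring

lemma sum_sq_star_mulVec (U : Matrix n n ℝ) (hU : U * star U = 1) (x : n → ℝ) :
    ∑ i, ((star U *ᵥ x) i) ^ 2 = x ⬝ᵥ x := by
  have h := dot_conj U (fun _ => (1 : ℝ)) x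
  have hd : diagonal (fun _ => (1 : ℝ)) = (1 : Matrix n n ℝ) := diagonal_one
  rw [hd, Matrix.mul_one, hU, one_mulVec] at h
  simpa using h.symm

lemma quad_ge (U : Matrix n n ℝ) (hU : U * star U = 1) (d : n → ℝ) (K : ℝ)
    (hd : ∀ i, K ≤ d i) (x : n → ℝ) :
    K * (x ⬝ᵥ x) ≤ x ⬝ᵥ (U * diagonal d * star U) *ᵥ x := by
  rw [dot_conj, ← sum_sq_star_mulVec U hU x, Finset.mul_sum]
  exact Finset.sum_le_sum fun i _ => mul_le_mul_of_nonneg_right (hd i) (sq_nonneg _)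

lemma spectral_real {S : Matrix n n ℝ} (hS : S.IsHermitian) :
    S = (hS.eigenvectorUnitary : Matrix n n ℝ) * diagonal hS.eigenvalues *
      star (hS.eigenvectorUnitary : Matrix n n ℝ) := by
  have h := hS.spectral_theorem
  rwa [show RCLike.ofReal ∘ hS.eigenvalues = hS.eigenvalues by
    funext i; simp] at h

lemma rayleigh_le {S : Matrix n n ℝ} (hS : S.IsHermitian) (x : n → ℝ) :
    (⨅ i, hS.eigenvalues i) * (x ⬝ᵥ x) ≤ x ⬝ᵥ S *ᵥ x := by
  have hU : (hS.eigenvectorUnitary : Matrix n n ℝ) *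
      star (hS.eigenvectorUnitary : Matrix n n ℝ) = 1 :=
    mem_unitaryGroup_iff.mp hS.eigenvectorUnitary.2
  nth_rewrite 2 [spectral_real hS]
  exact quad_ge _ hU _ _ (fun i => ciInf_le (Finite.bddBelow_range _) i) x

set_option maxHeartbeats 1000000 in
lemma eig_ge' (U : Matrix n n ℝ) (hU : U * star U = 1) (hU' : star U * U = 1)
    (d : n → ℝ) (c : ℝ)
    (h : ∀ x : n → ℝ, c * (x ⬝ᵥ x) ≤ x ⬝ᵥ (U * diagonal d * star U) *ᵥ x) (i : n) :
    c ≤ d i := by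
  have hw : star U *ᵥ (U *ᵥ Pi.single i 1) = Pi.single i 1 := by
    rw [mulVec_mulVec, hU', one_mulVec]
  have h1 : (U *ᵥ Pi.single i 1) ⬝ᵥ (U *ᵥ Pi.single i 1) = 1 := by
    rw [← sum_sq_star_mulVec U hU (U *ᵥ Pi.single i 1), hw]
    simp [Pi.single_apply, sq, Finset.sum_ite_eq']
  have h3 := h (U *ᵥ Pi.single i 1)
  rw [dot_conj, hw, h1, mul_one] at h3
  have h4 : ∑ j, d j * (Pi.single i 1 : n → ℝ) j ^ 2 = d i := by
    simp [Pi.single_apply, sq, Finset.sum_ite_eq']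
  rw [h4] at h3
  exact h3

lemma eig_ge {S : Matrix n n ℝ} (hS : S.IsHermitian) (c : ℝ)
    (h : ∀ x : n → ℝ, c * (x ⬝ᵥ x) ≤ x ⬝ᵥ S *ᵥ x) (i : n) : c ≤ hS.eigenvalues i := by
  have hU : (hS.eigenvectorUnitary : Matrix n n ℝ) *
      star (hS.eigenvectorUnitary : Matrix n n ℝ) = 1 :=
    mem_unitaryGroup_iff.mp hS.eigenvectorUnitary.2
  have hU' : star (hS.eigenvectorUnitary : Matrix n n ℝ) *
      (hS.eigenvectorUnitary : Matrix n n ℝ) = 1 :=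
    mem_unitaryGroup_iff'.mp hS.eigenvectorUnitary.2
  refine eig_ge' _ hU hU' _ c (fun x => ?_) i
  rw [← spectral_real hS]
  exact h x

lemma smul_one_herm (c : ℝ) : (c • (1 : Matrix n n ℝ)).IsHermitian := by
  simp [Matrix.IsHermitian, conjTranspose_smul]

lemma conj_inv (U : Matrix n n ℝ) (hU : U * star U = 1) (hU' : star U * U = 1)
    (d : n → ℝ) (hd : ∀ i, d i ≠ 0) :
    (U * diagonal d * star U)⁻¹ = U * diagonal (fun i => (d i)⁻¹) * star U := by
  apply inv_eq_right_inv
  calc (U * diagonal d * star U) * (U * diagonal (fun i => (d i)⁻¹) * star U)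
      = U * (diagonal d * (star U * U) * diagonal fun i => (d i)⁻¹) * star U := by
        simp only [Matrix.mul_assoc]
    _ = U * star U := by
        have h1 : (fun i => d i * (d i)⁻¹) = fun _ => (1 : ℝ) :=
          funext fun i => mul_inv_cancel₀ (hd i)
        rw [hU', Matrix.mul_one, diagonal_mul_diagonal, h1, diagonal_one, Matrix.mul_one]
    _ = 1 := hU

lemma conj_form {m' : Type*} [Fintype m'] (B : Matrix m' n ℝ) (N : Matrix m' m' ℝ)
    (x : n → ℝ) :
    x ⬝ᵥ (Bᵀ * N * B) *ᵥ x = (B *ᵥ x) ⬝ᵥ N *ᵥ (B *ᵥ x) := by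
  have h : (Bᵀ * N * B) *ᵥ x = Bᵀ *ᵥ (N *ᵥ (B *ᵥ x)) := by
    simp [mulVec_mulVec, Matrix.mul_assoc]
  rw [h, dotProduct_mulVec, vecMul_transpose]

lemma opNorm_bound {m' n' : Type*} [Fintype m'] [Fintype n'] [DecidableEq n']
    (B : Matrix m' n' ℝ) (x : n' → ℝ) :
    (B *ᵥ x) ⬝ᵥ (B *ᵥ x) ≤ (opNorm B) ^ 2 * (x ⬝ᵥ x) := by
  set f := LinearMap.toContinuousLinearMap (Matrix.toEuclideanLin B) with hf
  set v : EuclideanSpace ℝ n' := (WithLp.equiv 2 (n' → ℝ)).symm x with hv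
  have hfv : f v = (WithLp.equiv 2 (m' → ℝ)).symm (B *ᵥ x) := by
    show Matrix.toEuclideanLin B v = _
    rw [Matrix.toEuclideanLin_apply, hv]
    simp
  have h1 : ‖f v‖ ≤ opNorm B * ‖v‖ := f.le_opNorm v
  have h2 : ‖f v‖ ^ 2 = (B *ᵥ x) ⬝ᵥ (B *ᵥ x) := by
    rw [hfv, EuclideanSpace.norm_eq, Real.sq_sqrt (by positivity)]
    simp [dotProduct, sq]
  have h3 : ‖v‖ ^ 2 = x ⬝ᵥ x := by
    rw [hv, EuclideanSpace.norm_eq, Real.sq_sqrt (by positivity)]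
    simp [dotProduct, sq]
  calc (B *ᵥ x) ⬝ᵥ (B *ᵥ x) = ‖f v‖ ^ 2 := h2.symm
    _ ≤ (opNorm B * ‖v‖) ^ 2 := by
        apply pow_le_pow_left₀ (norm_nonneg _) h1
    _ = (opNorm B) ^ 2 * ‖v‖ ^ 2 := by ring
    _ = (opNorm B) ^ 2 * (x ⬝ᵥ x) := by rw [h3]

lemma fromBlocks_sub' {l m' : Type*} (A A' : Matrix l l ℝ) (B B' : Matrix l m' ℝ)
    (C C' : Matrix m' l ℝ) (D D' : Matrix m' m' ℝ) :
    fromBlocks A B C D - fromBlocks A' B' C' D' =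
      fromBlocks (A - A') (B - B') (C - C') (D - D') := by
  ext (i | i) (j | j) <;> simp [fromBlocks]

end StmtAux

open StmtAux

set_option maxHeartbeats 2000000 in
/-- For a positive definite block matrix M = [[A,B],[Bᵀ,C]],
λ_min(M) ≥ min(λ_min(A)/8, λ_min(M/A)/(1 + 4 λ_min(A)⁻² ‖B‖_op²)). -/
theorem stmt_3 {p q : ℕ} (hp : 0 < p) (hq : 0 < q)
    (A : Matrix (Fin p) (Fin p) ℝ) (B : Matrix (Fin p) (Fin q) ℝ)
    (C : Matrix (Fin q) (Fin q) ℝ)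
    (hM : (Matrix.fromBlocks A B Bᵀ C).PosDef)
    (hA : A.IsHermitian) (hSchur : (C - Bᵀ * A⁻¹ * B).IsHermitian) :
    min (lamMin A hA / 8)
      (lamMin (C - Bᵀ * A⁻¹ * B) hSchur / (1 + 4 * ((lamMin A hA)^2)⁻¹ * (opNorm B)^2))
    ≤ lamMin (Matrix.fromBlocks A B Bᵀ C) hM.isHermitian := by
  classical
  haveI : Nonempty (Fin p) := ⟨⟨0, hp⟩⟩
  haveI : Nonempty (Fin q) := ⟨⟨0, hq⟩⟩
  set a := lamMin A hA with hadef
  set b := opNorm B with hbdef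
  set s := lamMin (C - Bᵀ * A⁻¹ * B) hSchur with hsdef
  set c := min (a / 8) (s / (1 + 4 * (a ^ 2)⁻¹ * b ^ 2)) with hcdef
  -- A is positive definite
  have hApd : A.PosDef := by
    refine PosDef.of_dotProduct_mulVec_pos hA fun x hx => ?_
    have hz : Sum.elim x (0 : Fin q → ℝ) ≠ 0 := by
      intro h
      exact hx (funext fun i => congrFun h (Sum.inl i))
    have h := hM.dotProduct_mulVec_pos hz
    simpa [fromBlocks_mulVec, sumElim_dotProduct_sumElim] using h
  have ha_pos : 0 < a := by
    obtain ⟨i, hi⟩ := exists_eq_ciInf_of_finite (f := hA.eigenvalues)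
    rw [hadef, lamMin, ← hi]
    exact hApd.eigenvalues_pos i
  have hb0 : 0 ≤ b := norm_nonneg _
  have hden : 0 < 1 + 4 * (a ^ 2)⁻¹ * b ^ 2 := by positivity
  have hc8 : c ≤ a / 8 := min_le_left _ _
  have hcs : c * (1 + 4 * (a ^ 2)⁻¹ * b ^ 2) ≤ s :=
    (le_div_iff₀ hden).mp (min_le_right _ _)
  rcases le_or_gt c 0 with hc0 | hc0
  · exact le_trans hc0 (le_ciInf fun i => (hM.eigenvalues_pos i).le)
  -- spectral data for A
  set U := (hA.eigenvectorUnitary : Matrix (Fin p) (Fin p) ℝ) with hUdef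
  have hU : U * star U = 1 := mem_unitaryGroup_iff.mp hA.eigenvectorUnitary.2
  have hU' : star U * U = 1 := mem_unitaryGroup_iff'.mp hA.eigenvectorUnitary.2
  set μ := hA.eigenvalues with hμdef
  have hAspec : A = U * diagonal μ * star U := spectral_real hA
  have hμa : ∀ i, a ≤ μ i := fun i => ciInf_le (Finite.bddBelow_range _) i
  have hca : c < a := lt_of_le_of_lt hc8 (by linarith)
  have hμc_pos : ∀ i, 0 < μ i - c := fun i => by have := hμa i; linarith
  have hμ_pos : ∀ i, 0 < μ i := fun i => lt_of_lt_of_le ha_pos (hμa i)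
  -- the shifted matrix A - c • 1
  have hshift : A - c • 1 = U * diagonal (fun i => μ i - c) * star U := by
    have h1 : c • (1 : Matrix (Fin p) (Fin p) ℝ) = U * diagonal (fun _ => c) * star U := by
      have : diagonal (fun _ => c) = c • (1 : Matrix (Fin p) (Fin p) ℝ) :=
        (smul_one_eq_diagonal c).symm
      rw [this, Matrix.mul_smul, Matrix.mul_one, Matrix.smul_mul, hU]
    rw [hAspec, h1, ← diagonal_sub, Matrix.mul_sub, Matrix.sub_mul]
  have hinv_shift : (A - c • 1)⁻¹ = U * diagonal (fun i => (μ i - c)⁻¹) * star U := by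
    rw [hshift]
    exact conj_inv U hU hU' _ (fun i => (hμc_pos i).ne')
  have hinvA : A⁻¹ = U * diagonal (fun i => (μ i)⁻¹) * star U := by
    rw [hAspec]
    exact conj_inv U hU hU' _ (fun i => (hμ_pos i).ne')
  -- A - c • 1 is positive definite
  have hAcd : (A - c • 1).PosDef := by
    refine PosDef.of_dotProduct_mulVec_pos (hA.sub (smul_one_herm c)) fun x hx => ?_
    · have hxx : 0 < x ⬝ᵥ x := by
        rcases lt_or_eq_of_le (Finset.sum_nonneg fun i _ => mul_self_nonneg (x i) :
            (0 : ℝ) ≤ x ⬝ᵥ x) with h | h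
        · exact h
        · exact absurd (dotProduct_self_eq_zero.mp h.symm) hx
      have hray := rayleigh_le hA x
      have : (star x) ⬝ᵥ (A - c • 1) *ᵥ x = x ⬝ᵥ A *ᵥ x - c * (x ⬝ᵥ x) := by
        simp [sub_mulVec, dotProduct_sub, smul_mulVec, dotProduct_smul, smul_eq_mul]
      rw [this]
      have : a * (x ⬝ᵥ x) ≤ x ⬝ᵥ A *ᵥ x := hray
      nlinarith
  haveI : Invertible (A - c • 1) := hAcd.isUnit.invertible
  have hBT : Bᴴ = Bᵀ := conjTranspose_eq_transpose_of_trivial B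
  -- the Schur complement of the shifted matrix is PSD
  have hC : C.IsHermitian := by
    have hBAB : (Bᵀ * A⁻¹ * B).IsHermitian := by
      rw [← hBT]; exact isHermitian_conjTranspose_mul_mul B hA.inv
    have := hSchur.add hBAB
    rwa [sub_add_cancel] at this
  have hsm1 : (c • (1 : Matrix (Fin q) (Fin q) ℝ)).IsHermitian := smul_one_herm c
  have hSchurShift : ((C - c • 1) - Bᴴ * (A - c • 1)⁻¹ * B).PosSemidef := by
    refine PosSemidef.of_dotProduct_mulVec_nonneg ((hC.sub hsm1).sub (isHermitian_conjTranspose_mul_mul B hAcd.1.inv)) fun x => ?_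
    set y := B *ᵥ x with hy
    have hform : (star x) ⬝ᵥ ((C - c • 1) - Bᴴ * (A - c • 1)⁻¹ * B) *ᵥ x =
        x ⬝ᵥ C *ᵥ x - c * (x ⬝ᵥ x) - y ⬝ᵥ (A - c • 1)⁻¹ *ᵥ y := by
      rw [hBT]
      simp only [sub_mulVec, dotProduct_sub, star_trivial]
      rw [conj_form B ((A - c • 1)⁻¹) x]
      simp [smul_mulVec, dotProduct_smul, smul_eq_mul, hy, mulVec_mulVec]
    rw [hform]
    -- decompose C
    have hCx : x ⬝ᵥ C *ᵥ x = x ⬝ᵥ (C - Bᵀ * A⁻¹ * B) *ᵥ x + y ⬝ᵥ A⁻¹ *ᵥ y := by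
      have hCeq : C = (C - Bᵀ * A⁻¹ * B) + Bᵀ * A⁻¹ * B := (sub_add_cancel _ _).symm
      nth_rewrite 1 [hCeq]
      rw [add_mulVec, dotProduct_add, conj_form B A⁻¹ x]
    have h5 : s * (x ⬝ᵥ x) ≤ x ⬝ᵥ (C - Bᵀ * A⁻¹ * B) *ᵥ x := rayleigh_le hSchur x
    -- the inverse-difference bound
    have hgK : ∀ i, (μ i - c)⁻¹ - (μ i)⁻¹ ≤ 4 * c / a ^ 2 := by
      intro i
      have h1 := hμa i
      have h2 := hμ_pos i
      have h3 := hμc_pos i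
      have he : (μ i - c)⁻¹ - (μ i)⁻¹ = c / (μ i * (μ i - c)) := by
        rw [inv_sub_inv h3.ne' h2.ne']
        ring_nf
      rw [he, div_le_div_iff₀ (by positivity) (by positivity)]
      have hmm : a * (a - c) ≤ μ i * (μ i - c) :=
        mul_le_mul h1 (by linarith) (by linarith) h2.le
      nlinarith [mul_le_mul_of_nonneg_left hmm hc0.le,
        mul_nonneg hc0.le (show (0:ℝ) ≤ a - 8 * c by linarith),
        mul_pos ha_pos hc0, mul_pos hc0 hc0, ha_pos, hc0, hc8]
    have h2 : y ⬝ᵥ (A - c • 1)⁻¹ *ᵥ y - y ⬝ᵥ A⁻¹ *ᵥ y ≤ (4 * c / a ^ 2) * (y ⬝ᵥ y) := by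
      rw [hinv_shift, hinvA, dot_conj, dot_conj, ← Finset.sum_sub_distrib,
        ← sum_sq_star_mulVec U hU y, Finset.mul_sum]
      refine Finset.sum_le_sum fun i _ => ?_
      linarith [mul_le_mul_of_nonneg_right (hgK i) (sq_nonneg ((star U *ᵥ y) i))]
    have h3 : y ⬝ᵥ y ≤ b ^ 2 * (x ⬝ᵥ x) := opNorm_bound B x
    have hxx : 0 ≤ x ⬝ᵥ x := Finset.sum_nonneg fun i _ => mul_self_nonneg (x i)
    have e1 : (4 * c / a ^ 2) * (y ⬝ᵥ y) ≤ (4 * c / a ^ 2) * (b ^ 2 * (x ⬝ᵥ x)) :=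
      mul_le_mul_of_nonneg_left h3 (by positivity)
    have e2 : c * (1 + 4 * (a ^ 2)⁻¹ * b ^ 2) * (x ⬝ᵥ x) ≤ s * (x ⬝ᵥ x) :=
      mul_le_mul_of_nonneg_right hcs hxx
    have er1 : (4 * c / a ^ 2) * (b ^ 2 * (x ⬝ᵥ x)) =
        c * (4 * (a ^ 2)⁻¹ * b ^ 2) * (x ⬝ᵥ x) := by ring
    have er2 : c * (1 + 4 * (a ^ 2)⁻¹ * b ^ 2) * (x ⬝ᵥ x) =
        c * (x ⬝ᵥ x) + c * (4 * (a ^ 2)⁻¹ * b ^ 2) * (x ⬝ᵥ x) := by ring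
    rw [hCx]
    linarith
  -- the shifted block matrix is PSD
  have hMshift : ((fromBlocks A B Bᵀ C) - c • 1).PosSemidef := by
    have hblocks : (fromBlocks A B Bᵀ C) - c • 1 =
        fromBlocks (A - c • 1) B Bᴴ (C - c • 1) := by
      rw [← fromBlocks_one, fromBlocks_smul, fromBlocks_sub', hBT]
      simp
    rw [hblocks]
    exact (PosDef.fromBlocks₁₁ B (C - c • 1) hAcd).mpr hSchurShift
  -- conclude via the eigenvalue bound
  have hform : ∀ z : (Fin p ⊕ Fin q) → ℝ,
      c * (z ⬝ᵥ z) ≤ z ⬝ᵥ (fromBlocks A B Bᵀ C) *ᵥ z := by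
    intro z
    have h := hMshift.dotProduct_mulVec_nonneg z
    have : (star z) ⬝ᵥ ((fromBlocks A B Bᵀ C) - c • 1) *ᵥ z =
        z ⬝ᵥ (fromBlocks A B Bᵀ C) *ᵥ z - c * (z ⬝ᵥ z) := by
      simp [sub_mulVec, dotProduct_sub, smul_mulVec, dotProduct_smul, smul_eq_mul]
    rw [this] at h
    linarith
  exact le_ciInf fun i => eig_ge hM.isHermitian c hform i
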